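/- Gradient identity for the reparametrized displacement potential (from the proof of Proposition 3.3): Let φ: ℝ^n → ℝ be a C², ℤ^n-periodic-gradient function and let s ∈ ℝ satisfy |s| · sup‖∇²φ‖ < 1, so that T_s := id + s∇φ is a C¹ diffeomorphism of ℝ^n. Define ψ(y) := φ(T_s^{−1}(y)) + (s/2) |∇φ(T_s^{−1}(y))|². Then ψ is differentiable and ∇ψ(y) = ∇φ(T_s^{−1}(y)) for every y ∈ ℝ^n. -/

import Mathlib

open MeasureTheory

/-- The gradient vector `∇f(x)` of `f : ℝⁿ → ℝ`. -/
noncomputable def grad {n : ℕ} (f : (Fin n → ℝ) → ℝ) (x : Fin n → ℝ) : Fin n → ℝ :=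
  fun i => fderiv ℝ f x (Pi.single i 1)

/-- The Hessian matrix `∇²f(x)` of `f : ℝⁿ → ℝ`. -/
noncomputable def hess {n : ℕ} (f : (Fin n → ℝ) → ℝ) (x : Fin n → ℝ) :
    Matrix (Fin n) (Fin n) ℝ :=
  Matrix.of fun i j => fderiv ℝ (fun y => grad f y i) x (Pi.single j 1)

/-- Euclidean inner product on `ℝⁿ`. -/
def dot {n : ℕ} (u v : Fin n → ℝ) : ℝ := ∑ i, u i * v i

noncomputable def Bmap (n : ℕ) : ((Fin n → ℝ) →L[ℝ] ℝ) →L[ℝ] (Fin n → ℝ) :=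
  ContinuousLinearMap.pi fun i => ContinuousLinearMap.apply ℝ ℝ (Pi.single i 1)

noncomputable def Hmap {n : ℕ} (φ : (Fin n → ℝ) → ℝ) (x : Fin n → ℝ) :
    (Fin n → ℝ) →L[ℝ] (Fin n → ℝ) :=
  (Bmap n).comp (fderiv ℝ (fderiv ℝ φ) x)

lemma clm_pi_apply {n : ℕ} {F : Type*} [NormedAddCommGroup F] [NormedSpace ℝ F]
    (L : (Fin n → ℝ) →L[ℝ] F) (v : Fin n → ℝ) :
    L v = ∑ i, v i • L (Pi.single i 1) := by
  conv_lhs => rw [← Finset.univ_sum_single v]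
  rw [map_sum]
  refine Finset.sum_congr rfl fun i _ => ?_
  have h : Pi.single i (v i) = v i • (Pi.single i 1 : Fin n → ℝ) := by
    funext j
    by_cases hj : i = j <;> simp [Pi.single_apply, hj]
  rw [h, _root_.map_smul]

lemma hasFDerivAt_grad {n : ℕ} {φ : (Fin n → ℝ) → ℝ} (hφ : ContDiff ℝ 2 φ) (x : Fin n → ℝ) :
    HasFDerivAt (grad φ) (Hmap φ x) x := by
  have h1 : ContDiff ℝ 1 (fderiv ℝ φ) := hφ.fderiv_right (le_refl 2)
  have hf2 : HasFDerivAt (fderiv ℝ φ) (fderiv ℝ (fderiv ℝ φ) x) x :=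
    (h1.differentiable one_ne_zero x).hasFDerivAt
  exact (Bmap n).hasFDerivAt.comp x hf2

lemma clm_pi_apply' {n : ℕ} (L : (Fin n → ℝ) →L[ℝ] ℝ) (v : Fin n → ℝ) :
    L v = ∑ i, v i * L (Pi.single i 1) := by
  rw [clm_pi_apply]; rfl

lemma fderiv_eq_dot {n : ℕ} (φ : (Fin n → ℝ) → ℝ) (x v : Fin n → ℝ) :
    fderiv ℝ φ x v = dot (grad φ x) v := by
  rw [clm_pi_apply' (fderiv ℝ φ x) v]
  unfold dot grad
  exact Finset.sum_congr rfl fun i _ => mul_comm _ _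

lemma hasFDerivAt_grad_comp {n : ℕ} {φ : (Fin n → ℝ) → ℝ} (hφ : ContDiff ℝ 2 φ)
    (x : Fin n → ℝ) (i : Fin n) :
    HasFDerivAt (fun y => grad φ y i)
      ((ContinuousLinearMap.proj i).comp (Hmap φ x)) x :=
  ((ContinuousLinearMap.proj i).hasFDerivAt.comp x (hasFDerivAt_grad hφ x) :)

set_option maxHeartbeats 400000 in
lemma hess_mulVec {n : ℕ} {φ : (Fin n → ℝ) → ℝ} (hφ : ContDiff ℝ 2 φ)
    (x u : Fin n → ℝ) : (hess φ x).mulVec u = Hmap φ x u := by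
  funext i
  have h1 : ∀ j, hess φ x i j = fderiv ℝ (fderiv ℝ φ) x (Pi.single j 1) (Pi.single i 1) := by
    intro j
    have := (hasFDerivAt_grad_comp hφ x i).fderiv
    simp only [hess, Matrix.of_apply, this]
    rfl
  have h2 : Hmap φ x u i = fderiv ℝ (fderiv ℝ φ) x u (Pi.single i 1) := rfl
  rw [h2, clm_pi_apply (fderiv ℝ (fderiv ℝ φ) x) u]
  simp only [Matrix.mulVec, dotProduct, ContinuousLinearMap.coe_sum', Finset.sum_apply,

    ContinuousLinearMap.coe_smul', Pi.smul_apply, smul_eq_mul]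
  refine Finset.sum_congr rfl fun j _ => ?_
  show hess φ x i j * u j = _
  rw [h1 j, mul_comm]

lemma dot_Hmap {n : ℕ} (φ : (Fin n → ℝ) → ℝ) (x u v : Fin n → ℝ) :
    dot u (Hmap φ x v) = fderiv ℝ (fderiv ℝ φ) x v u := by
  rw [clm_pi_apply' (fderiv ℝ (fderiv ℝ φ) x v) u]
  unfold dot
  rfl

lemma dot_Hmap_symm {n : ℕ} {φ : (Fin n → ℝ) → ℝ} (hφ : ContDiff ℝ 2 φ)
    (x u v : Fin n → ℝ) : dot u (Hmap φ x v) = dot v (Hmap φ x u) := by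
  rw [dot_Hmap, dot_Hmap]
  exact (hφ.contDiffAt.isSymmSndFDerivAt (by simp)) v u

section Euc
open RealInnerProductSpace

variable {n : ℕ}

local notation "E" => EuclideanSpace ℝ (Fin n)

noncomputable def eC (n : ℕ) : EuclideanSpace ℝ (Fin n) ≃L[ℝ] (Fin n → ℝ) :=
  EuclideanSpace.equiv (Fin n) ℝ

noncomputable def HE (φ : (Fin n → ℝ) → ℝ) (x : EuclideanSpace ℝ (Fin n)) :
    EuclideanSpace ℝ (Fin n) →L[ℝ] EuclideanSpace ℝ (Fin n) :=
  ((eC n).symm.toContinuousLinearMap.comp (Hmap φ ((eC n) x))).comp (eC n).toContinuousLinearMap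

lemma inner_eq_dot (u v : EuclideanSpace ℝ (Fin n)) :
    (inner ℝ u v : ℝ) = dot ((eC n) u) ((eC n) v) := by
  simp [PiLp.inner_apply, RCLike.inner_apply', dot, eC]
  exact Finset.sum_congr rfl fun i _ => mul_comm _ _

lemma eC_HE (φ : (Fin n → ℝ) → ℝ) (x u : EuclideanSpace ℝ (Fin n)) :
    (eC n) (HE φ x u) = Hmap φ ((eC n) x) ((eC n) u) := by
  simp [HE]

lemma inner_HE_symm {φ : (Fin n → ℝ) → ℝ} (hφ : ContDiff ℝ 2 φ)
    (x u v : EuclideanSpace ℝ (Fin n)) :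
    (inner ℝ u (HE φ x v) : ℝ) = (inner ℝ v (HE φ x u) : ℝ) := by
  rw [inner_eq_dot, inner_eq_dot, eC_HE, eC_HE, dot_Hmap_symm hφ]


lemma inner_HE_quad {φ : (Fin n → ℝ) → ℝ} {K : ℝ}
    (hKq : ∀ x u, |dot u (Hmap φ x u)| ≤ K * dot u u)
    (x u : EuclideanSpace ℝ (Fin n)) :
    |(inner ℝ u (HE φ x u) : ℝ)| ≤ K * (‖u‖ * ‖u‖) := by
  have h := hKq ((eC n) x) ((eC n) u)
  rw [inner_eq_dot, eC_HE]
  have h2 : dot ((eC n) u) ((eC n) u) = ‖u‖ * ‖u‖ := by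
    rw [← inner_eq_dot, real_inner_self_eq_norm_mul_norm]
  rw [← h2]
  exact h

lemma inner_HE_bilin {φ : (Fin n → ℝ) → ℝ} {K : ℝ} (hφ : ContDiff ℝ 2 φ) (hK0 : 0 ≤ K)
    (hKq : ∀ x u, |dot u (Hmap φ x u)| ≤ K * dot u u)
    (x u v : EuclideanSpace ℝ (Fin n)) :
    |(inner ℝ u (HE φ x v) : ℝ)| ≤ K * ‖u‖ * ‖v‖ := by
  have key : ∀ u v : EuclideanSpace ℝ (Fin n),
      |(inner ℝ u (HE φ x v) : ℝ)| ≤ K * (‖u‖ * ‖u‖ + ‖v‖ * ‖v‖) / 2 := by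
    intro u v
    have hsymm := inner_HE_symm hφ x u v
    have e1 : (inner ℝ (u + v) (HE φ x (u + v)) : ℝ) - (inner ℝ (u - v) (HE φ x (u - v)) : ℝ)
        = 4 * (inner ℝ u (HE φ x v) : ℝ) := by
      simp only [map_add, map_sub, inner_add_left, inner_add_right, inner_sub_left,
        inner_sub_right]
      rw [← hsymm]
      ring
    have q1 := inner_HE_quad hKq x (u + v)
    have q2 := inner_HE_quad hKq x (u - v)
    have par := parallelogram_law_with_norm ℝ u v
    have : |4 * (inner ℝ u (HE φ x v) : ℝ)| ≤ K * (‖u + v‖ * ‖u + v‖) + K * (‖u - v‖ * ‖u - v‖) := by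
      rw [← e1]
      exact (abs_sub _ _).trans (add_le_add q1 q2)
    rw [abs_mul] at this
    simp only [abs_of_nonneg (by norm_num : (0:ℝ) ≤ 4)] at this
    nlinarith [abs_nonneg (inner ℝ u (HE φ x v) : ℝ)]
  rcases eq_or_ne u 0 with hu | hu
  · simp [hu]
  rcases eq_or_ne v 0 with hv | hv
  · simp [hv]
  have hun : 0 < ‖u‖ := norm_pos_iff.2 hu
  have hvn : 0 < ‖v‖ := norm_pos_iff.2 hv
  set a : ℝ := Real.sqrt (‖v‖ / ‖u‖) with ha
  have ha0 : 0 < a := Real.sqrt_pos.2 (by positivity)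
  have ha2 : a * a = ‖v‖ / ‖u‖ := Real.mul_self_sqrt (by positivity)
  have h := key (a • u) (a⁻¹ • v)
  rw [_root_.map_smul, real_inner_smul_left, real_inner_smul_right] at h
  rw [norm_smul, norm_smul] at h
  simp only [Real.norm_eq_abs, abs_of_pos ha0, abs_of_pos (inv_pos.2 ha0)] at h
  rw [abs_mul, abs_mul, abs_of_pos ha0, abs_of_pos (inv_pos.2 ha0)] at h
  have hmul : a * (a⁻¹ * |(inner ℝ u (HE φ x v) : ℝ)|) = |(inner ℝ u (HE φ x v) : ℝ)| := by
    field_simp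
  rw [hmul] at h
  have hnorm : a * ‖u‖ * (a * ‖u‖) + a⁻¹ * ‖v‖ * (a⁻¹ * ‖v‖) = 2 * (‖u‖ * ‖v‖) := by
    have hainv : a⁻¹ * a⁻¹ = ‖u‖ / ‖v‖ := by
      rw [← mul_inv, ha2, inv_div]
    have e1 : a * ‖u‖ * (a * ‖u‖) = (a * a) * (‖u‖ * ‖u‖) := by ring
    have e2 : a⁻¹ * ‖v‖ * (a⁻¹ * ‖v‖) = (a⁻¹ * a⁻¹) * (‖v‖ * ‖v‖) := by ring
    rw [e1, e2, ha2, hainv]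
    field_simp
    ring
  calc |(inner ℝ u (HE φ x v) : ℝ)| ≤ K * (a * ‖u‖ * (a * ‖u‖) + a⁻¹ * ‖v‖ * (a⁻¹ * ‖v‖)) / 2 := h
    _ = K * ‖u‖ * ‖v‖ := by rw [hnorm]; ring

lemma HE_op_norm {φ : (Fin n → ℝ) → ℝ} {K : ℝ} (hφ : ContDiff ℝ 2 φ) (hK0 : 0 ≤ K)
    (hKq : ∀ x u, |dot u (Hmap φ x u)| ≤ K * dot u u)
    (x : EuclideanSpace ℝ (Fin n)) : ‖HE φ x‖ ≤ K := by
  refine ContinuousLinearMap.opNorm_le_bound _ hK0 fun v => ?_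
  rcases eq_or_lt_of_le (norm_nonneg (HE φ x v)) with h0 | h0
  · rw [← h0]
    positivity
  have h := inner_HE_bilin hφ hK0 hKq x (HE φ x v) v
  rw [real_inner_self_eq_norm_mul_norm] at h
  rw [abs_of_nonneg (mul_nonneg (norm_nonneg _) (norm_nonneg _))] at h
  nlinarith [norm_nonneg v]

noncomputable def gE (φ : (Fin n → ℝ) → ℝ) (x : EuclideanSpace ℝ (Fin n)) :
    EuclideanSpace ℝ (Fin n) :=
  (eC n).symm (grad φ ((eC n) x))

lemma hasFDerivAt_gE {φ : (Fin n → ℝ) → ℝ} (hφ : ContDiff ℝ 2 φ)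
    (x : EuclideanSpace ℝ (Fin n)) : HasFDerivAt (gE φ) (HE φ x) x := by
  have h1 : HasFDerivAt (grad φ ∘ (eC n)) ((Hmap φ ((eC n) x)).comp (eC n).toContinuousLinearMap) x :=
    (hasFDerivAt_grad hφ ((eC n) x)).comp x ((eC n).toContinuousLinearMap.hasFDerivAt)
  have h2 := ((eC n).symm.toContinuousLinearMap.hasFDerivAt).comp x h1
  exact h2

lemma lipschitz_gE {φ : (Fin n → ℝ) → ℝ} {K : ℝ} (hφ : ContDiff ℝ 2 φ) (hK0 : 0 ≤ K)
    (hKq : ∀ x u, |dot u (Hmap φ x u)| ≤ K * dot u u) :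
    LipschitzWith (NNReal.mk K hK0) (gE φ) := by
  apply lipschitzWith_of_nnnorm_fderiv_le (fun x => (hasFDerivAt_gE hφ x).differentiableAt)
  intro x
  rw [(hasFDerivAt_gE hφ x).fderiv]
  rw [← NNReal.coe_le_coe, coe_nnnorm, NNReal.coe_mk]
  exact HE_op_norm hφ hK0 hKq x

lemma gE_norm_sub {φ : (Fin n → ℝ) → ℝ} {K : ℝ} (hφ : ContDiff ℝ 2 φ) (hK0 : 0 ≤ K)
    (hKq : ∀ x u, |dot u (Hmap φ x u)| ≤ K * dot u u)
    (x y : EuclideanSpace ℝ (Fin n)) : ‖gE φ x - gE φ y‖ ≤ K * ‖x - y‖ := by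
  have h := (lipschitz_gE hφ hK0 hKq).dist_le_mul x y
  rwa [dist_eq_norm, dist_eq_norm, NNReal.coe_mk] at h

noncomputable def FE (φ : (Fin n → ℝ) → ℝ) (s : ℝ) (x : EuclideanSpace ℝ (Fin n)) :
    EuclideanSpace ℝ (Fin n) :=
  x + s • gE φ x

lemma FE_key {φ : (Fin n → ℝ) → ℝ} {s K : ℝ} (hφ : ContDiff ℝ 2 φ) (hK0 : 0 ≤ K)
    (hKq : ∀ x u, |dot u (Hmap φ x u)| ≤ K * dot u u) (hs : |s| * K < 1)
    (x y : EuclideanSpace ℝ (Fin n)) :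
    (1 - |s| * K) * ‖x - y‖ ≤ ‖FE φ s x - FE φ s y‖ := by
  have h1 : ‖s • gE φ x - s • gE φ y‖ ≤ |s| * K * ‖x - y‖ := by
    rw [← smul_sub, norm_smul, Real.norm_eq_abs, mul_assoc]
    exact mul_le_mul_of_nonneg_left (gE_norm_sub hφ hK0 hKq x y) (abs_nonneg s)
  have h2 : ‖x - y‖ ≤ ‖FE φ s x - FE φ s y‖ + ‖s • gE φ x - s • gE φ y‖ := by
    have : x - y = (FE φ s x - FE φ s y) - (s • gE φ x - s • gE φ y) := by
      simp only [FE]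
      abel
    rw [this]
    exact norm_sub_le _ _
  nlinarith [norm_nonneg (x - y)]

lemma FE_inj {φ : (Fin n → ℝ) → ℝ} {s K : ℝ} (hφ : ContDiff ℝ 2 φ) (hK0 : 0 ≤ K)
    (hKq : ∀ x u, |dot u (Hmap φ x u)| ≤ K * dot u u) (hs : |s| * K < 1) :
    Function.Injective (FE φ s) := by
  intro x y hxy
  have h := FE_key hφ hK0 hKq hs x y
  rw [hxy, sub_self, norm_zero] at h
  have : ‖x - y‖ ≤ 0 := by nlinarith [norm_nonneg (x - y)]
  have := le_antisymm this (norm_nonneg _)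
  rwa [norm_sub_eq_zero_iff] at this

lemma FE_surj {φ : (Fin n → ℝ) → ℝ} {s K : ℝ} (hφ : ContDiff ℝ 2 φ) (hK0 : 0 ≤ K)
    (hKq : ∀ x u, |dot u (Hmap φ x u)| ≤ K * dot u u) (hs : |s| * K < 1) :
    Function.Surjective (FE φ s) := by
  intro y
  set c : NNReal := ‖s‖₊ * NNReal.mk K hK0 with hc
  have hc1 : c < 1 := by
    rw [← NNReal.coe_lt_coe, NNReal.coe_mul, coe_nnnorm, Real.norm_eq_abs, NNReal.coe_mk]
    simpa using hs
  have hcoe : (c : ℝ) = |s| * K := by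
    rw [NNReal.coe_mul, coe_nnnorm, Real.norm_eq_abs, NNReal.coe_mk]
  have hlip : LipschitzWith c (fun x => y - s • gE φ x) := by
    apply LipschitzWith.of_dist_le_mul
    intro a b
    rw [hcoe, dist_eq_norm, dist_eq_norm]
    have e1 : (y - s • gE φ a) - (y - s • gE φ b) = s • gE φ b - s • gE φ a := by abel
    rw [e1, ← smul_sub, norm_smul, Real.norm_eq_abs, mul_assoc]
    exact mul_le_mul_of_nonneg_left
      ((gE_norm_sub hφ hK0 hKq b a).trans_eq (by rw [norm_sub_rev])) (abs_nonneg s)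
  obtain ⟨z, hz, -⟩ := ContractingWith.exists_fixedPoint ⟨hc1, hlip⟩ 0 (edist_ne_top _ _)
  refine ⟨z, ?_⟩
  have h : y - s • gE φ z = z := hz
  show z + s • gE φ z = y
  exact (congrArg (fun w => w + s • gE φ z) h).symm.trans (by abel)

lemma exists_deriv_equiv {φ : (Fin n → ℝ) → ℝ} {s K : ℝ} (hφ : ContDiff ℝ 2 φ) (hK0 : 0 ≤ K)
    (hKq : ∀ x u, |dot u (Hmap φ x u)| ≤ K * dot u u) (hs : |s| * K < 1)
    (x : Fin n → ℝ) :
    ∃ Dx : (Fin n → ℝ) ≃L[ℝ] (Fin n → ℝ),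
      (Dx : (Fin n → ℝ) →L[ℝ] (Fin n → ℝ))
        = ContinuousLinearMap.id ℝ (Fin n → ℝ) + s • Hmap φ x := by
  have hn : ‖-(s • HE φ ((eC n).symm x))‖ < 1 := by
    rw [norm_neg]
    calc ‖s • HE φ ((eC n).symm x)‖ = |s| * ‖HE φ ((eC n).symm x)‖ := by
          rw [norm_smul s (HE φ ((eC n).symm x)), Real.norm_eq_abs]
      _ ≤ |s| * K := mul_le_mul_of_nonneg_left (HE_op_norm hφ hK0 hKq _) (abs_nonneg s)
      _ < 1 := hs
  refine ⟨((eC n).symm.trans (ContinuousLinearEquiv.ofUnit (Units.oneSub _ hn))).trans (eC n), ?_⟩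
  refine ContinuousLinearMap.ext fun v => ?_
  show (eC n) ((ContinuousLinearEquiv.ofUnit (Units.oneSub _ hn)) ((eC n).symm v)) = _
  have h1 : (ContinuousLinearEquiv.ofUnit (Units.oneSub _ hn)) ((eC n).symm v)
      = (eC n).symm v + s • HE φ ((eC n).symm x) ((eC n).symm v) := by
    show ((1 : (EuclideanSpace ℝ (Fin n)) →L[ℝ] (EuclideanSpace ℝ (Fin n)))
      - -(s • HE φ ((eC n).symm x))) ((eC n).symm v) = _
    simp
  rw [h1, map_add, _root_.map_smul, eC_HE]
  simp

lemma invFE_lipschitz {φ : (Fin n → ℝ) → ℝ} {s K : ℝ} (hφ : ContDiff ℝ 2 φ) (hK0 : 0 ≤ K)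
    (hKq : ∀ x u, |dot u (Hmap φ x u)| ≤ K * dot u u) (hs : |s| * K < 1) :
    Continuous (Function.invFun (FE φ s)) := by
  have hsurj := FE_surj hφ hK0 hKq hs
  have hpos : (0:ℝ) < 1 - |s| * K := by linarith
  refine (LipschitzWith.of_dist_le_mul (K := ((1 - |s| * K)⁻¹).toNNReal) ?_).continuous
  intro a b
  rw [Real.coe_toNNReal _ (by positivity), dist_eq_norm, dist_eq_norm]
  have ha := Function.rightInverse_invFun hsurj a
  have hb := Function.rightInverse_invFun hsurj b
  have h := FE_key hφ hK0 hKq hs (Function.invFun (FE φ s) a) (Function.invFun (FE φ s) b)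
  rw [ha, hb] at h
  rw [inv_mul_eq_div, le_div_iff₀ hpos]
  linarith

lemma F_eq (φ : (Fin n → ℝ) → ℝ) (s : ℝ) :
    (fun x : Fin n → ℝ => x + s • grad φ x) = ⇑(eC n) ∘ FE φ s ∘ ⇑(eC n).symm := by
  funext x
  show x + s • grad φ x
    = (eC n) ((eC n).symm x + s • (eC n).symm (grad φ ((eC n) ((eC n).symm x))))
  rw [map_add, _root_.map_smul]
  simp

end Euc


/-- **Gradient identity for the reparametrized displacement potential.** Let `φ : ℝⁿ → ℝ` be `C²`
with `ℤⁿ`-periodic gradient, and let `s` satisfy `|s| · sup‖∇²φ‖ < 1` (operator-norm bound on the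
symmetric Hessian, expressed through its quadratic form), so that `T_s = id + s∇φ` is a
(`C¹`-)diffeomorphism of `ℝⁿ`. Define `ψ(y) = φ(T_s⁻¹ y) + (s/2)|∇φ(T_s⁻¹ y)|²`. Then `T_s` is
bijective, and `ψ` is differentiable with `∇ψ(y) = ∇φ(T_s⁻¹ y)` for every `y`. -/
theorem stmt16 (n : ℕ) (φ : (Fin n → ℝ) → ℝ) (hφ : ContDiff ℝ 2 φ)
    (hper : ∀ (x : Fin n → ℝ) (k : Fin n → ℤ),
      grad φ (x + fun i => (k i : ℝ)) = grad φ x)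
    (s K : ℝ) (hK0 : 0 ≤ K)
    (hK : ∀ x u, |dot u ((hess φ x).mulVec u)| ≤ K * dot u u)
    (hs : |s| * K < 1) :
    Function.Bijective (fun x : Fin n → ℝ => x + s • grad φ x) ∧
    ∀ y : Fin n → ℝ,
      HasFDerivAt
        (fun z : Fin n → ℝ =>
          φ (Function.invFun (fun x : Fin n → ℝ => x + s • grad φ x) z)
            + (s / 2) * dot
              (grad φ (Function.invFun (fun x : Fin n → ℝ => x + s • grad φ x) z))
              (grad φ (Function.invFun (fun x : Fin n → ℝ => x + s • grad φ x) z)))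
        (∑ i, grad φ (Function.invFun (fun x : Fin n → ℝ => x + s • grad φ x) y) i
          • ContinuousLinearMap.proj (R := ℝ) (φ := fun _ : Fin n => ℝ) i)
        y := by
  classical
  have hKq : ∀ x u, |dot u (Hmap φ x u)| ≤ K * dot u u := by
    intro x u
    have h := hK x u
    rwa [hess_mulVec hφ] at h
  have hbijE : Function.Bijective (FE φ s) :=
    ⟨FE_inj hφ hK0 hKq hs, FE_surj hφ hK0 hKq hs⟩
  have hbij : Function.Bijective (fun x : Fin n → ℝ => x + s • grad φ x) := by
    rw [F_eq φ s]
    exact ((eC n).bijective.comp hbijE).comp (eC n).symm.bijective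
  refine ⟨hbij, fun y => ?_⟩
  set Fmap : (Fin n → ℝ) → (Fin n → ℝ) := fun x => x + s • grad φ x with hFmap
  set Finv := Function.invFun Fmap with hFinvdef
  have hRI : Function.RightInverse Finv Fmap := Function.rightInverse_invFun hbij.2
  set x := Finv y with hx
  -- continuity of Finv at y
  have hFinvEq : Finv = ⇑(eC n) ∘ (Function.invFun (FE φ s)) ∘ ⇑(eC n).symm := by
    funext z
    apply hbij.1
    show Fmap (Finv z) = Fmap ((eC n) (Function.invFun (FE φ s) ((eC n).symm z)))
    rw [hRI z]
    have : Fmap ((eC n) (Function.invFun (FE φ s) ((eC n).symm z)))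
        = (eC n) (FE φ s (Function.invFun (FE φ s) ((eC n).symm z))) := by
      rw [hFmap, F_eq φ s]
      simp only [Function.comp_apply, ContinuousLinearEquiv.symm_apply_apply]
    rw [this, Function.rightInverse_invFun hbijE.2 ((eC n).symm z)]
    simp
  have hcont : ContinuousAt Finv y := by
    rw [hFinvEq]
    exact (((eC n).continuous.comp (invFE_lipschitz hφ hK0 hKq hs)).comp
      (eC n).symm.continuous).continuousAt
  obtain ⟨D, hD⟩ := exists_deriv_equiv hφ hK0 hKq hs x
  have hDF : HasFDerivAt Fmap (D : (Fin n → ℝ) →L[ℝ] (Fin n → ℝ)) x := by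
    rw [hD]
    exact (hasFDerivAt_id x).add ((hasFDerivAt_grad hφ x).const_smul s)
  have hinvd : HasFDerivAt Finv (D.symm : (Fin n → ℝ) →L[ℝ] (Fin n → ℝ)) y :=
    HasFDerivAt.of_local_left_inverse hcont hDF (Filter.Eventually.of_forall fun z => hRI z)
  set L : (Fin n → ℝ) →L[ℝ] ℝ
    := ∑ i, grad φ x i • ContinuousLinearMap.proj (R := ℝ) (φ := fun _ : Fin n => ℝ) i with hL
  have hgi : ∀ i, HasFDerivAt (fun z => grad φ z i)
      ((ContinuousLinearMap.proj i).comp (Hmap φ x)) x := fun i => hasFDerivAt_grad_comp hφ x i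
  have hphi : HasFDerivAt φ (fderiv ℝ φ x) x := (hφ.differentiable two_ne_zero x).hasFDerivAt
  have hdot : HasFDerivAt (fun z => dot (grad φ z) (grad φ z))
      (∑ i, (grad φ x i • ((ContinuousLinearMap.proj i).comp (Hmap φ x))
        + grad φ x i • ((ContinuousLinearMap.proj i).comp (Hmap φ x)))) x := by
    exact HasFDerivAt.fun_sum fun i _ => (hgi i).mul (hgi i)
  have hPhi : HasFDerivAt (fun z => φ z + (s / 2) * dot (grad φ z) (grad φ z))
      (fderiv ℝ φ x + (s/2) • ∑ i, (grad φ x i • ((ContinuousLinearMap.proj i).comp (Hmap φ x))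
        + grad φ x i • ((ContinuousLinearMap.proj i).comp (Hmap φ x)))) x :=
    hphi.add (hdot.const_mul (s/2))
  have hN : (fderiv ℝ φ x + (s/2) • ∑ i,
      (grad φ x i • ((ContinuousLinearMap.proj i).comp (Hmap φ x))
        + grad φ x i • ((ContinuousLinearMap.proj i).comp (Hmap φ x))))
      = L.comp (↑D : (Fin n → ℝ) →L[ℝ] (Fin n → ℝ)) := by
    refine ContinuousLinearMap.ext fun v => ?_
    rw [ContinuousLinearMap.comp_apply, hD]
    simp only [ContinuousLinearMap.add_apply, ContinuousLinearMap.smul_apply,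
      ContinuousLinearMap.sum_apply, ContinuousLinearMap.comp_apply,
      ContinuousLinearMap.proj_apply, ContinuousLinearMap.coe_id', id_eq, smul_eq_mul, hL,
      Pi.add_apply, Pi.smul_apply]
    rw [fderiv_eq_dot]
    unfold dot
    rw [Finset.mul_sum, ← Finset.sum_add_distrib]
    refine Finset.sum_congr rfl fun i _ => ?_
    ring
  have final := hPhi.comp y hinvd
  rw [hN] at final
  have hcomp : (L.comp (↑D : (Fin n → ℝ) →L[ℝ] (Fin n → ℝ))).comp
      (↑D.symm : (Fin n → ℝ) →L[ℝ] (Fin n → ℝ)) = L := by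
    refine ContinuousLinearMap.ext fun v => ?_
    simp [ContinuousLinearMap.comp_apply]
  rw [hcomp] at final
  exact final
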